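/- For any point x in R^D and any two d-dimensional linear subspaces L1, L2 of R^D, the absolute difference of the distances from x to L1 and to L2 is at most the norm of x times the Grassmannian distance between L1 and L2, where the Grassmannian distance is the square root of the sum of squares of the principal angles between L1 and L2. -/

import Mathlib

open scoped RealInnerProductSpace
open scoped Matrix
noncomputable section

abbrev E (D : ℕ) := EuclideanSpace ℝ (Fin D)

/-- projection onto `L` as an endomorphism of `E D` -/
def projL {D : ℕ} (L : Submodule ℝ (E D)) : E D →ₗ[ℝ] E D :=
  L.subtype ∘ₗ L.orthogonalProjectionOnto.toLinearMap

/-- projection matrix of `L` -/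
def projMat {D : ℕ} (L : Submodule ℝ (E D)) : Matrix (Fin D) (Fin D) ℝ :=
  LinearMap.toMatrix (EuclideanSpace.basisFun (Fin D) ℝ).toBasis
    (EuclideanSpace.basisFun (Fin D) ℝ).toBasis (projL L)

/-- eigenvalues of a matrix (0 if not Hermitian) -/
def eigs {D : ℕ} (M : Matrix (Fin D) (Fin D) ℝ) : Fin D → ℝ :=
  if h : M.IsHermitian then h.eigenvalues else 0

/-- the Grassmannian distance: the square root of the sum of the squares of the
principal angles between two `d`-dimensional subspaces.  The eigenvalues of
`P_F P_G P_F` are the `d` values `cos² θ_i` together with `D - d` zeros, so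
`∑ arccos(√λ_i)² = ∑ θ_i² + (D-d)(π/2)²`. -/
def dG {D : ℕ} (d : ℕ) (F G : Submodule ℝ (E D)) : ℝ :=
  Real.sqrt (∑ i, (Real.arccos (Real.sqrt (eigs (projMat F * projMat G * projMat F) i))) ^ 2
    - (D - d : ℝ) * (Real.pi / 2) ^ 2)

namespace DGAux

variable {D : ℕ}

lemma projL_mem (L : Submodule ℝ (E D)) (v : E D) : projL L v ∈ L :=
  (L.orthogonalProjectionOnto v).2

lemma projL_of_mem (L : Submodule ℝ (E D)) {v : E D} (hv : v ∈ L) : projL L v = v :=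
  congrArg Subtype.val (Submodule.orthogonalProjectionOnto_mem_subspace_eq_self (⟨v, hv⟩ : L))

lemma projL_idem (L : Submodule ℝ (E D)) (v : E D) : projL L (projL L v) = projL L v :=
  projL_of_mem L (projL_mem L v)

lemma projL_inner (L : Submodule ℝ (E D)) (u v : E D) :
    ⟪projL L u, v⟫ = ⟪u, projL L v⟫ :=
  Submodule.inner_starProjection_left_eq_right (K := L) u v

lemma inner_sub_projL (L : Submodule ℝ (E D)) (v : E D) {w : E D} (hw : w ∈ L) :
    ⟪w, v - projL L v⟫ = 0 :=
  (Submodule.sub_starProjection_mem_orthogonal (K := L) v) w hw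

lemma norm_sub_projL_le (L : Submodule ℝ (E D)) (x : E D) {y : E D} (hy : y ∈ L) :
    ‖x - projL L x‖ ≤ ‖x - y‖ := by
  have h0 : ⟪projL L x - y, x - projL L x⟫ = 0 :=
    inner_sub_projL L x (L.sub_mem (projL_mem L x) hy)
  have hxy : x - y = (x - projL L x) + (projL L x - y) := by abel
  have hsq : ‖x - y‖ ^ 2 = ‖x - projL L x‖ ^ 2 + ‖projL L x - y‖ ^ 2 := by
    rw [hxy, norm_add_sq_real, real_inner_comm, h0]; ring
  nlinarith [norm_nonneg (x - y), norm_nonneg (x - projL L x), sq_nonneg ‖projL L x - y‖]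

lemma infDist_eq (L : Submodule ℝ (E D)) (x : E D) :
    Metric.infDist x (L : Set (E D)) = ‖x - projL L x‖ := by
  refine le_antisymm ?_ ?_
  · simpa [dist_eq_norm] using Metric.infDist_le_dist_of_mem (projL_mem L x)
  · by_contra h
    push_neg at h
    obtain ⟨y, hy, hlt⟩ := (Metric.infDist_lt_iff ⟨0, L.zero_mem⟩).mp h
    rw [dist_eq_norm] at hlt
    exact absurd hlt (not_lt.mpr (norm_sub_projL_le L x hy))

lemma pyth (L : Submodule ℝ (E D)) (v : E D) :
    ‖v - projL L v‖ ^ 2 = ‖v‖ ^ 2 - ‖projL L v‖ ^ 2 := by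
  have h0 : ⟪projL L v, v - projL L v⟫ = 0 := inner_sub_projL L v (projL_mem L v)
  have hv : v = projL L v + (v - projL L v) := by abel
  have := norm_add_sq_real (projL L v) (v - projL L v)
  rw [← hv, h0] at this
  linarith

/-- Frobenius-type bound. -/
lemma norm_map_sq_le (T : E D →ₗ[ℝ] E D) (x : E D) :
    ‖T x‖ ^ 2 ≤ (∑ i, ‖T (EuclideanSpace.basisFun (Fin D) ℝ i)‖ ^ 2) * ‖x‖ ^ 2 := by
  set e := EuclideanSpace.basisFun (Fin D) ℝ
  have hx : T x = ∑ i, x i • T (e i) := by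
    conv_lhs => rw [← e.sum_repr x]
    rw [map_sum]
    simp [e, EuclideanSpace.basisFun_repr]
  have h1 : ‖T x‖ ≤ ∑ i, |x i| * ‖T (e i)‖ := by
    rw [hx]
    refine (norm_sum_le _ _).trans ?_
    apply Finset.sum_le_sum
    intro i _
    rw [norm_smul, Real.norm_eq_abs]
  have h2 : (∑ i, |x i| * ‖T (e i)‖) ^ 2 ≤ (∑ i, |x i| ^ 2) * ∑ i, ‖T (e i)‖ ^ 2 :=
    Finset.sum_mul_sq_le_sq_mul_sq _ _ _
  have h3 : (∑ i, |x i| ^ 2) = ‖x‖ ^ 2 := by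
    rw [EuclideanSpace.norm_eq, Real.sq_sqrt (by positivity)]
    simp [sq_abs]
  calc ‖T x‖ ^ 2 ≤ (∑ i, |x i| * ‖T (e i)‖) ^ 2 := by
        apply pow_le_pow_left₀ (norm_nonneg _) h1
    _ ≤ (∑ i, |x i| ^ 2) * ∑ i, ‖T (e i)‖ ^ 2 := h2
    _ = (∑ i, ‖T (e i)‖ ^ 2) * ‖x‖ ^ 2 := by rw [h3, mul_comm]

lemma projMat_entry (L : Submodule ℝ (E D)) (i j : Fin D) :
    projMat L i j = ⟪EuclideanSpace.basisFun (Fin D) ℝ i, projL L (EuclideanSpace.basisFun (Fin D) ℝ j)⟫ := by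
  rw [projMat, LinearMap.toMatrix_apply]
  simp [EuclideanSpace.basisFun_apply, EuclideanSpace.inner_single_left,
    OrthonormalBasis.coe_toBasis_repr_apply, EuclideanSpace.basisFun_repr]

lemma projMat_symm (L : Submodule ℝ (E D)) : (projMat L)ᵀ = projMat L := by
  ext i j
  rw [Matrix.transpose_apply, projMat_entry, projMat_entry, real_inner_comm,
    projL_inner]

lemma projMat_isHermitian (L : Submodule ℝ (E D)) : (projMat L).IsHermitian := by
  rw [Matrix.IsHermitian, Matrix.conjTranspose_eq_transpose_of_trivial, projMat_symm]

lemma projMat_idem (L : Submodule ℝ (E D)) : projMat L * projMat L = projMat L := by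
  rw [projMat, ← LinearMap.toMatrix_comp]
  congr 1
  exact LinearMap.ext (projL_idem L)

lemma isProj_projL (L : Submodule ℝ (E D)) : LinearMap.IsProj L (projL L) :=
  ⟨projL_mem L, fun _ hx => projL_of_mem L hx⟩

lemma projMat_trace (L : Submodule ℝ (E D)) :
    (projMat L).trace = (Module.finrank ℝ L : ℝ) := by
  rw [projMat, ← LinearMap.trace_eq_matrix_trace]
  exact (isProj_projL L).trace

lemma range_projL (L : Submodule ℝ (E D)) : LinearMap.range (projL L) = L := by
  rw [projL, LinearMap.range_comp]
  have : LinearMap.range L.orthogonalProjectionOnto.toLinearMap = ⊤ := by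
    rw [LinearMap.range_eq_top]
    intro y
    exact ⟨(y : E D), Submodule.orthogonalProjectionOnto_mem_subspace_eq_self y⟩
  rw [this, Submodule.map_subtype_top]

lemma projMat_rank (L : Submodule ℝ (E D)) :
    (projMat L).rank = Module.finrank ℝ L := by
  rw [projMat, Matrix.rank_eq_finrank_range_toLin _
    (EuclideanSpace.basisFun (Fin D) ℝ).toBasis (EuclideanSpace.basisFun (Fin D) ℝ).toBasis,
    Matrix.toLin_toMatrix, range_projL]

lemma trace_eq_sum_eigenvalues {A : Matrix (Fin D) (Fin D) ℝ} (hA : A.IsHermitian) :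
    A.trace = ∑ i, hA.eigenvalues i := by
  simpa using hA.trace_eq_sum_eigenvalues

end DGAux

namespace DGAux

open Real

variable {D : ℕ}

lemma one_sub_le_arccos_sq {l : ℝ} (h0 : 0 ≤ l) :
    1 - l ≤ (Real.arccos (Real.sqrt l)) ^ 2 := by
  rcases le_or_gt 1 l with h | h
  · nlinarith [sq_nonneg (Real.arccos (Real.sqrt l))]
  · have hs : Real.sin (Real.arccos (Real.sqrt l)) = Real.sqrt (1 - l) := by
      rw [Real.sin_arccos, Real.sq_sqrt h0]
    have h1 : Real.sqrt (1 - l) ≤ Real.arccos (Real.sqrt l) :=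
      hs ▸ Real.sin_le (Real.arccos_nonneg _)
    calc 1 - l = Real.sqrt (1 - l) ^ 2 := (Real.sq_sqrt (by linarith)).symm
      _ ≤ (Real.arccos (Real.sqrt l)) ^ 2 := by
          apply pow_le_pow_left₀ (Real.sqrt_nonneg _) h1

lemma key_sum {d : ℕ} (hdD : d ≤ D) (lam : Fin D → ℝ) (h0 : ∀ i, 0 ≤ lam i)
    (hcard : (Finset.univ.filter (fun i => lam i ≠ 0)).card ≤ d) :
    (d : ℝ) - ∑ i, lam i
      ≤ ∑ i, (Real.arccos (Real.sqrt (lam i))) ^ 2 - ((D : ℝ) - d) * (π / 2) ^ 2 := by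
  classical
  set Z := Finset.univ.filter (fun i => lam i = 0) with hZdef
  set Zc := Finset.univ.filter (fun i => ¬ lam i = 0) with hZcdef
  have hsplit1 : ∑ i ∈ Z, lam i + ∑ i ∈ Zc, lam i = ∑ i, lam i :=
    Finset.sum_filter_add_sum_filter_not _ _ _
  have hsplit2 : ∑ i ∈ Z, (Real.arccos (Real.sqrt (lam i))) ^ 2
      + ∑ i ∈ Zc, (Real.arccos (Real.sqrt (lam i))) ^ 2
      = ∑ i, (Real.arccos (Real.sqrt (lam i))) ^ 2 :=
    Finset.sum_filter_add_sum_filter_not _ _ _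
  have hZ0 : ∑ i ∈ Z, lam i = 0 := by
    apply Finset.sum_eq_zero
    intro i hi
    exact (Finset.mem_filter.mp hi).2
  have hZf : ∑ i ∈ Z, (Real.arccos (Real.sqrt (lam i))) ^ 2 = (Z.card : ℝ) * (π / 2) ^ 2 := by
    rw [Finset.sum_congr rfl (fun i hi => by
      rw [(Finset.mem_filter.mp hi).2, Real.sqrt_zero, Real.arccos_zero])]
    rw [Finset.sum_const, nsmul_eq_mul]
  have hcards : Z.card + Zc.card = D := by
    rw [hZdef, hZcdef]
    rw [Finset.card_filter_add_card_filter_not]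
    simp
  have hpt : (Zc.card : ℝ) - ∑ i ∈ Zc, lam i ≤ ∑ i ∈ Zc, (Real.arccos (Real.sqrt (lam i))) ^ 2 := by
    have := Finset.sum_le_sum (fun i (_ : i ∈ Zc) => one_sub_le_arccos_sq (h0 i))
    rw [Finset.sum_sub_distrib, Finset.sum_const, nsmul_eq_mul, mul_one] at this
    exact this
  have hpi : (1 : ℝ) ≤ (π / 2) ^ 2 := by nlinarith [Real.pi_gt_three]
  have hZcard : ((D : ℝ) - d) ≤ (Z.card : ℝ) := by
    have h1 : (Zc.card : ℝ) ≤ d := by exact_mod_cast hcard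
    have h2 : (Z.card : ℝ) + Zc.card = D := by exact_mod_cast hcards
    linarith
  have hDR : (Z.card : ℝ) + Zc.card = D := by exact_mod_cast hcards
  nlinarith [mul_le_mul_of_nonneg_right hZcard (le_trans zero_le_one hpi)]

end DGAux

namespace DGAux

open Real

variable {D : ℕ}


lemma inner_e_projL (L : Submodule ℝ (E D)) (v : E D) :
    ⟪v, projL L v⟫ = ‖projL L v‖ ^ 2 := by
  rw [← real_inner_self_eq_norm_sq]
  conv_lhs => rw [← projL_idem L v]
  rw [← projL_inner]

lemma toMat_entry (f : E D →ₗ[ℝ] E D) (i j : Fin D) :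
    LinearMap.toMatrix (EuclideanSpace.basisFun (Fin D) ℝ).toBasis (EuclideanSpace.basisFun (Fin D) ℝ).toBasis f i j = ⟪(EuclideanSpace.basisFun (Fin D) ℝ) i, f ((EuclideanSpace.basisFun (Fin D) ℝ) j)⟫ := by
  rw [LinearMap.toMatrix_apply]
  simp [EuclideanSpace.basisFun_apply, EuclideanSpace.inner_single_left,
    OrthonormalBasis.coe_toBasis_repr_apply, EuclideanSpace.basisFun_repr]

lemma sum_norm_projL_sq (L : Submodule ℝ (E D)) :
    ∑ i, ‖projL L ((EuclideanSpace.basisFun (Fin D) ℝ) i)‖ ^ 2 = (projMat L).trace := by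
  rw [Matrix.trace]
  apply Finset.sum_congr rfl
  intro i _
  rw [Matrix.diag_apply, projMat_entry, inner_e_projL]

lemma sum_norm_projL_projL_sq (L₁ L₂ : Submodule ℝ (E D)) :
    ∑ i, ‖projL L₂ (projL L₁ ((EuclideanSpace.basisFun (Fin D) ℝ) i))‖ ^ 2
      = (projMat L₁ * projMat L₂ * projMat L₁).trace := by
  have hmat : projMat L₁ * projMat L₂ * projMat L₁
      = LinearMap.toMatrix (EuclideanSpace.basisFun (Fin D) ℝ).toBasis (EuclideanSpace.basisFun (Fin D) ℝ).toBasis (projL L₁ ∘ₗ (projL L₂ ∘ₗ projL L₁)) := by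
    rw [LinearMap.toMatrix_comp (EuclideanSpace.basisFun (Fin D) ℝ).toBasis (EuclideanSpace.basisFun (Fin D) ℝ).toBasis (EuclideanSpace.basisFun (Fin D) ℝ).toBasis, LinearMap.toMatrix_comp (EuclideanSpace.basisFun (Fin D) ℝ).toBasis (EuclideanSpace.basisFun (Fin D) ℝ).toBasis (EuclideanSpace.basisFun (Fin D) ℝ).toBasis, mul_assoc]
    simp only [projMat]
  rw [hmat, Matrix.trace]
  apply Finset.sum_congr rfl
  intro i _
  rw [Matrix.diag_apply, toMat_entry]
  simp only [LinearMap.comp_apply]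
  rw [← projL_inner, inner_e_projL]

lemma trace_cycle_eq (L₁ L₂ : Submodule ℝ (E D)) :
    (projMat L₂ * projMat L₁ * projMat L₂).trace
      = (projMat L₁ * projMat L₂ * projMat L₁).trace := by
  have ha : (projMat L₂ * projMat L₁ * projMat L₂).trace = (projMat L₂ * projMat L₁).trace := by
    rw [Matrix.trace_mul_cycle (projMat L₂) (projMat L₁) (projMat L₂), projMat_idem]
  have hb : (projMat L₁ * projMat L₂ * projMat L₁).trace = (projMat L₁ * projMat L₂).trace := by
    rw [Matrix.trace_mul_cycle (projMat L₁) (projMat L₂) (projMat L₁), projMat_idem]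
  rw [ha, hb, Matrix.trace_mul_comm]

lemma posSemidef_A (L₁ L₂ : Submodule ℝ (E D)) :
    (projMat L₁ * projMat L₂ * projMat L₁).PosSemidef := by
  have h := Matrix.posSemidef_conjTranspose_mul_self (projMat L₂ * projMat L₁)
  have hct : (projMat L₂ * projMat L₁)ᴴ = projMat L₁ * projMat L₂ := by
    rw [Matrix.conjTranspose_eq_transpose_of_trivial, Matrix.transpose_mul,
      projMat_symm, projMat_symm]
  rw [hct, ← mul_assoc, mul_assoc (projMat L₁), projMat_idem] at h
  exact h

/-- common tail: from the Frobenius bound to the `dG` bound -/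
lemma bound_of_sum {d : ℕ} (hdD : d ≤ D) (L₁ L₂ : Submodule ℝ (E D))
    (h₁ : Module.finrank ℝ L₁ = d)
    (T : E D →ₗ[ℝ] E D)
    (hsum : ∑ i, ‖T ((EuclideanSpace.basisFun (Fin D) ℝ) i)‖ ^ 2
      = (d : ℝ) - (projMat L₁ * projMat L₂ * projMat L₁).trace)
    (x : E D) : ‖T x‖ ≤ dG d L₁ L₂ * ‖x‖ := by
  set A := projMat L₁ * projMat L₂ * projMat L₁ with hAdef
  have hApsd : A.PosSemidef := posSemidef_A L₁ L₂
  have hA : A.IsHermitian := hApsd.isHermitian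
  have heigs : eigs A = hA.eigenvalues := by rw [eigs, dif_pos hA]
  have h0 : ∀ i, 0 ≤ hA.eigenvalues i := fun i => hApsd.eigenvalues_nonneg i
  have hrank : A.rank ≤ d := by
    calc A.rank ≤ (projMat L₁ * projMat L₂).rank := Matrix.rank_mul_le_left _ _
      _ ≤ (projMat L₁).rank := Matrix.rank_mul_le_left _ _
      _ = d := by rw [projMat_rank, h₁]
  have hcard : (Finset.univ.filter (fun i => hA.eigenvalues i ≠ 0)).card ≤ d := by
    classical
    rw [← Fintype.card_subtype, ← hA.rank_eq_card_non_zero_eigs]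
    exact hrank
  have htr : A.trace = ∑ i, hA.eigenvalues i := trace_eq_sum_eigenvalues hA
  set t := ∑ i, (Real.arccos (Real.sqrt (eigs A i))) ^ 2 - ((D : ℝ) - d) * (π / 2) ^ 2
    with htdef
  have hkey : (d : ℝ) - A.trace ≤ t := by
    rw [htr, htdef, heigs]
    exact key_sum hdD hA.eigenvalues h0 hcard
  have hfro : ‖T x‖ ^ 2 ≤ t * ‖x‖ ^ 2 := by
    calc ‖T x‖ ^ 2 ≤ (∑ i, ‖T ((EuclideanSpace.basisFun (Fin D) ℝ) i)‖ ^ 2) * ‖x‖ ^ 2 := norm_map_sq_le T x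
      _ = ((d : ℝ) - A.trace) * ‖x‖ ^ 2 := by rw [hsum]
      _ ≤ t * ‖x‖ ^ 2 := mul_le_mul_of_nonneg_right hkey (sq_nonneg _)
  have hdG : dG d L₁ L₂ = Real.sqrt t := rfl
  calc ‖T x‖ = Real.sqrt (‖T x‖ ^ 2) := (Real.sqrt_sq (norm_nonneg _)).symm
    _ ≤ Real.sqrt (t * ‖x‖ ^ 2) := Real.sqrt_le_sqrt hfro
    _ = Real.sqrt t * ‖x‖ := by
        rw [Real.sqrt_mul' _ (sq_nonneg _), Real.sqrt_sq (norm_nonneg _)]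
    _ = dG d L₁ L₂ * ‖x‖ := by rw [hdG]

end DGAux


/-- for any `x ∈ ℝ^D` and `d`-dimensional subspaces `L₁, L₂`,
`|dist(x,L₁) - dist(x,L₂)| ≤ ‖x‖ ⬝ d_G(L₁,L₂)`. -/
theorem dist_diff_le_norm_mul_dG
    (D d : ℕ) (hd : 0 < d) (hdD : d < D)
    (L₁ L₂ : Submodule ℝ (E D))
    (h₁ : Module.finrank ℝ L₁ = d) (h₂ : Module.finrank ℝ L₂ = d)
    (x : E D) :
    |Metric.infDist x (L₁ : Set (E D)) - Metric.infDist x (L₂ : Set (E D))|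
      ≤ ‖x‖ * dG d L₁ L₂ := by
  have hdD' : d ≤ D := hdD.le
  set T₁ : E D →ₗ[ℝ] E D := projL L₁ - projL L₂ ∘ₗ projL L₁ with hT₁
  set T₂ : E D →ₗ[ℝ] E D := projL L₂ - projL L₁ ∘ₗ projL L₂ with hT₂
  have hT₁x : ∀ y, T₁ y = projL L₁ y - projL L₂ (projL L₁ y) := fun y => by
    simp [hT₁, LinearMap.sub_apply, LinearMap.comp_apply]
  have hT₂x : ∀ y, T₂ y = projL L₂ y - projL L₁ (projL L₂ y) := fun y => by
    simp [hT₂, LinearMap.sub_apply, LinearMap.comp_apply]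
  have hsum₁ : ∑ i, ‖T₁ (EuclideanSpace.basisFun (Fin D) ℝ i)‖ ^ 2
      = (d : ℝ) - (projMat L₁ * projMat L₂ * projMat L₁).trace := by
    have hterm : ∀ i : Fin D, ‖T₁ (EuclideanSpace.basisFun (Fin D) ℝ i)‖ ^ 2
        = ‖projL L₁ (EuclideanSpace.basisFun (Fin D) ℝ i)‖ ^ 2
          - ‖projL L₂ (projL L₁ (EuclideanSpace.basisFun (Fin D) ℝ i))‖ ^ 2 := by
      intro i
      rw [hT₁x]
      exact DGAux.pyth L₂ _
    rw [Finset.sum_congr rfl (fun i _ => hterm i), Finset.sum_sub_distrib,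
      DGAux.sum_norm_projL_sq, DGAux.sum_norm_projL_projL_sq, DGAux.projMat_trace, h₁]
  have hsum₂ : ∑ i, ‖T₂ (EuclideanSpace.basisFun (Fin D) ℝ i)‖ ^ 2
      = (d : ℝ) - (projMat L₁ * projMat L₂ * projMat L₁).trace := by
    have hterm : ∀ i : Fin D, ‖T₂ (EuclideanSpace.basisFun (Fin D) ℝ i)‖ ^ 2
        = ‖projL L₂ (EuclideanSpace.basisFun (Fin D) ℝ i)‖ ^ 2
          - ‖projL L₁ (projL L₂ (EuclideanSpace.basisFun (Fin D) ℝ i))‖ ^ 2 := by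
      intro i
      rw [hT₂x]
      exact DGAux.pyth L₁ _
    rw [Finset.sum_congr rfl (fun i _ => hterm i), Finset.sum_sub_distrib,
      DGAux.sum_norm_projL_sq, DGAux.sum_norm_projL_projL_sq,
      DGAux.trace_cycle_eq, DGAux.projMat_trace, h₂]
  have hb₁ : ‖T₁ x‖ ≤ dG d L₁ L₂ * ‖x‖ := DGAux.bound_of_sum hdD' L₁ L₂ h₁ T₁ hsum₁ x
  have hb₂ : ‖T₂ x‖ ≤ dG d L₁ L₂ * ‖x‖ := DGAux.bound_of_sum hdD' L₁ L₂ h₁ T₂ hsum₂ x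
  rw [DGAux.infDist_eq, DGAux.infDist_eq, abs_sub_le_iff]
  constructor
  · -- ‖x - P₁ x‖ - ‖x - P₂ x‖ ≤ ‖x‖ * dG
    have hmin : ‖x - projL L₁ x‖ ≤ ‖x - projL L₁ (projL L₂ x)‖ :=
      DGAux.norm_sub_projL_le L₁ x (DGAux.projL_mem L₁ (projL L₂ x))
    have htri : ‖x - projL L₁ (projL L₂ x)‖ ≤ ‖x - projL L₂ x‖ + ‖T₂ x‖ := by
      have hsplit : x - projL L₁ (projL L₂ x)
          = (x - projL L₂ x) + (projL L₂ x - projL L₁ (projL L₂ x)) := by abel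
      rw [hsplit, ← hT₂x]
      exact norm_add_le _ _
    have : dG d L₁ L₂ * ‖x‖ = ‖x‖ * dG d L₁ L₂ := mul_comm _ _
    linarith
  · have hmin : ‖x - projL L₂ x‖ ≤ ‖x - projL L₂ (projL L₁ x)‖ :=
      DGAux.norm_sub_projL_le L₂ x (DGAux.projL_mem L₂ (projL L₁ x))
    have htri : ‖x - projL L₂ (projL L₁ x)‖ ≤ ‖x - projL L₁ x‖ + ‖T₁ x‖ := by
      have hsplit : x - projL L₂ (projL L₁ x)
          = (x - projL L₁ x) + (projL L₁ x - projL L₂ (projL L₁ x)) := by abel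
      rw [hsplit, ← hT₁x]
      exact norm_add_le _ _
    have : dG d L₁ L₂ * ‖x‖ = ‖x‖ * dG d L₁ L₂ := mul_comm _ _
    linarith
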